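/- Let p be a prime and n an integer with 1 ≤ n ≤ p − 1. Work in the multivariate polynomial ring ℤ[u_1, …, u_{p−1}] and let D be the unique ℤ-derivation of this ring with D(u_i) = 1 for every i. Set f := u_1·u_2·…·u_{p−1} and let S be the map g ↦ D(f·g), so that S^n(1) is the word (∂f)^n = ∂f∂f…∂f with n letters ∂ and n letters f. Let J = (j_1, …, j_m) be a Young diagram with N(J) = n and m ≤ p − 1. Then the coefficient of the monomial u_1^{n−j_1}·u_2^{n−j_2}·…·u_m^{n−j_m}·u_{m+1}^n·…·u_{p−1}^n in S^n(1) equals d(J). -/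

import Mathlib

/-- Decrement the `s`-th entry of `J` by one, deleting it if it becomes zero
(entries of a Young diagram are positive, so only the modified entry can vanish). -/
def YoungStep (J : List ℕ) (s : ℕ) : List ℕ :=
  (J.set s (J.getD s 0 - 1)).filter (· != 0)

/-- `dAux n J` computes the function `d` on Young diagrams, using the fuel `n`
(which is taken to be `N(J) = j_1 + ⋯ + j_m`, the amount by which the recursion
descends; `d(∅) = 1`). -/
def dAux : ℕ → List ℕ → ℤ
  | 0, _ => 1
  | n + 1, J =>
    ∑ s ∈ (Finset.range J.length).filter (fun s => J.getD (s + 1) 0 < J.getD s 0),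
      ((J.sum : ℤ) - (J.getD s 0 : ℤ) + 1) * (J.count (J.getD s 0) : ℤ) * dAux n (YoungStep J s)

/-- The function `d` on Young diagrams: `d(∅) = 1` and
`d(J) = ∑_{s : j_s > j_{s+1}} (N(J) − j_s + 1) · n_{j_s}(J) · d(j_1,…,j_s − 1,…,j_m)`. -/
def youngD (J : List ℕ) : ℤ := dAux J.sum J

namespace CWHelper

lemma getD_all_zero {l : List ℕ} (h : ∀ x ∈ l, x = 0) (k : ℕ) : l.getD k 0 = 0 := by
  rcases lt_or_ge k l.length with hk | hk
  · rw [List.getD_eq_getElem _ _ hk]; exact h _ (l.getElem_mem hk)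
  · exact List.getD_eq_default _ _ hk

lemma le_sum_of_mem {l : List ℕ} {x : ℕ} (h : x ∈ l) : x ≤ l.sum := by
  induction l with
  | nil => simp at h
  | cons a t ih =>
    rcases List.mem_cons.1 h with rfl | h'
    · simp
    · have := ih h'; simp only [List.sum_cons]; omega

lemma getD_le_sum (l : List ℕ) (k : ℕ) : l.getD k 0 ≤ l.sum := by
  rcases lt_or_ge k l.length with hk | hk
  · rw [List.getD_eq_getElem _ _ hk]; exact le_sum_of_mem (l.getElem_mem hk)
  · rw [List.getD_eq_default _ _ hk]; exact Nat.zero_le _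

lemma getD_set {l : List ℕ} {s : ℕ} (hs : s < l.length) (x k : ℕ) :
    (l.set s x).getD k 0 = if k = s then x else l.getD k 0 := by
  rcases lt_or_ge k l.length with hk | hk
  · rw [List.getD_eq_getElem _ _ (by simpa using hk), List.getElem_set]
    rcases eq_or_ne k s with rfl | hne
    · simp
    · rw [if_neg (Ne.symm hne), if_neg hne, List.getD_eq_getElem _ _ hk]
  · rw [List.getD_eq_default _ _ (by simpa using hk), List.getD_eq_default _ _ hk,
      if_neg (by omega)]

lemma sorted_getD_mono {l : List ℕ} (h : l.Pairwise (· ≥ ·)) {a b : ℕ} (hab : a ≤ b) :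
    l.getD b 0 ≤ l.getD a 0 := by
  rcases lt_or_ge b l.length with hb | hb
  · have ha : a < l.length := lt_of_le_of_lt hab hb
    rw [List.getD_eq_getElem _ _ hb, List.getD_eq_getElem _ _ ha]
    rcases eq_or_lt_of_le hab with rfl | hlt
    · exact le_refl _
    · exact List.pairwise_iff_getElem.1 h a b ha hb hlt
  · rw [List.getD_eq_default _ _ hb]; exact Nat.zero_le _

lemma sorted_set {l : List ℕ} (h : l.Pairwise (· ≥ ·)) {s : ℕ} (hs : s < l.length)
    (hlt : l.getD (s + 1) 0 < l.getD s 0) :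
    (l.set s (l.getD s 0 - 1)).Pairwise (· ≥ ·) := by
  rw [List.pairwise_iff_getElem]
  intro i j hi hj hij
  simp only [List.length_set] at hi hj
  rw [List.getElem_set, List.getElem_set]
  have egi : l[i] = l.getD i 0 := (List.getD_eq_getElem _ _ hi).symm
  have egj : l[j] = l.getD j 0 := (List.getD_eq_getElem _ _ hj).symm
  split_ifs with h1 h2 h2
  · omega
  · -- s = i, so j > s
    have : l.getD j 0 ≤ l.getD (s + 1) 0 := sorted_getD_mono h (by omega)
    rw [egj]; omega
  · -- s = j, i < s
    have : l.getD s 0 ≤ l.getD i 0 := sorted_getD_mono h (by omega)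
    rw [egi]; omega
  · rw [egi, egj]; exact sorted_getD_mono h (le_of_lt hij)

lemma filter_ne_zero_getD {l : List ℕ} (h : l.Pairwise (· ≥ ·)) (k : ℕ) :
    (l.filter (· != 0)).getD k 0 = l.getD k 0 := by
  induction l generalizing k with
  | nil => simp
  | cons a t ih =>
    rcases List.pairwise_cons.1 h with ⟨hat, ht⟩
    by_cases ha : a = 0
    · subst ha
      have hz : ∀ x ∈ t, x = 0 := fun x hx => Nat.le_zero.1 (hat x hx)
      have hfil : (0 :: t).filter (· != 0) = [] := by
        rw [List.filter_eq_nil_iff]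
        intro x hx
        rcases List.mem_cons.1 hx with rfl | hx'
        · simp
        · simp [hz x hx']
      rw [hfil]
      cases k with
      | zero => simp
      | succ k => rw [List.getD_cons_succ, getD_all_zero hz]; simp
    · rw [List.filter_cons_of_pos (by simpa using ha)]
      cases k with
      | zero => simp
      | succ k => rw [List.getD_cons_succ, List.getD_cons_succ, ih ht]

lemma sum_filter_ne_zero (l : List ℕ) : (l.filter (· != 0)).sum = l.sum := by
  induction l with
  | nil => rfl
  | cons a t ih =>
    by_cases ha : a = 0
    · subst ha; rw [List.filter_cons_of_neg (by simp)]; simpa using ih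
    · rw [List.filter_cons_of_pos (by simpa using ha), List.sum_cons, List.sum_cons, ih]

lemma sum_set_pred {l : List ℕ} : ∀ {s : ℕ}, s < l.length → 1 ≤ l.getD s 0 →
    (l.set s (l.getD s 0 - 1)).sum + 1 = l.sum := by
  induction l with
  | nil => intro s hs; simp at hs
  | cons a t ih =>
    intro s hs h1
    cases s with
    | zero =>
      simp only [List.getD_cons_zero] at h1 ⊢
      simp only [List.set_cons_zero, List.sum_cons]
      omega
    | succ s =>
      simp only [List.getD_cons_succ] at h1 ⊢
      simp only [List.set_cons_succ, List.sum_cons]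
      have := ih (by simpa using hs) h1
      omega

lemma card_filter_getD (l : List ℕ) (v : ℕ) :
    ((Finset.range l.length).filter (fun k => l.getD k 0 = v)).card = l.count v := by
  induction l with
  | nil => simp
  | cons a t ih =>
    rw [Finset.card_filter, List.length_cons, Finset.sum_range_succ']
    simp only [List.getD_cons_succ, List.getD_cons_zero]
    rw [← Finset.card_filter, ih, List.count_cons]
    congr 1
    rcases eq_or_ne a v with rfl | h
    · simp
    · rw [if_neg h, if_neg (by simp [h, Ne.symm h])]

lemma length_eq_one_of_getD_eq_sum {J : List ℕ} (hpos : ∀ x ∈ J, 0 < x) {k : ℕ}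
    (hk : J.getD k 0 = J.sum) (h0 : 0 < J.sum) : J.length = 1 ∧ k = 0 := by
  cases J with
  | nil => simp at h0
  | cons a t =>
    simp only [List.sum_cons] at hk h0 ⊢
    have hapos : 0 < a := hpos a (by simp)
    cases k with
    | zero =>
      simp only [List.getD_cons_zero] at hk
      have ht : t.sum = 0 := by omega
      have : t = [] := by
        cases t with
        | nil => rfl
        | cons b t' =>
          have hb : 0 < b := hpos b (by simp)
          simp only [List.sum_cons] at ht
          omega
      subst this; simp
    | succ k =>
      exfalso
      rw [List.getD_cons_succ] at hk
      have := getD_le_sum t k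
      omega

/-- the largest index of `J` carrying the same value as index `i`. -/
def lastIdx (J : List ℕ) (i : ℕ) : ℕ :=
  ((Finset.range J.length).filter (fun k => J.getD k 0 = J.getD i 0)).sup id

lemma lastIdx_spec {J : List ℕ} {i : ℕ} (hi : i < J.length) :
    lastIdx J i < J.length ∧ J.getD (lastIdx J i) 0 = J.getD i 0 := by
  obtain ⟨b, hb, hsup⟩ := Finset.exists_mem_eq_sup
    ((Finset.range J.length).filter (fun k => J.getD k 0 = J.getD i 0))
    ⟨i, by simp [hi]⟩ id
  rw [lastIdx, hsup]
  simp only [Finset.mem_filter, Finset.mem_range] at hb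
  exact hb

lemma le_lastIdx {J : List ℕ} {i : ℕ} (hi : i < J.length) : i ≤ lastIdx J i :=
  Finset.le_sup (f := id) (by simp [hi])

lemma lastIdx_congr {J : List ℕ} {x y : ℕ} (h : J.getD x 0 = J.getD y 0) :
    lastIdx J x = lastIdx J y := by
  unfold lastIdx; rw [h]

lemma lastIdx_getD_lt {J : List ℕ} (hmono : J.Pairwise (· ≥ ·)) (hpos : ∀ x ∈ J, 0 < x)
    {i : ℕ} (hi : i < J.length) : J.getD (lastIdx J i + 1) 0 < J.getD i 0 := by
  obtain ⟨hlt, heq⟩ := lastIdx_spec (J := J) hi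
  have hposi : 0 < J.getD i 0 := by
    rw [List.getD_eq_getElem _ _ hi]; exact hpos _ (J.getElem_mem hi)
  rcases lt_or_ge (lastIdx J i + 1) J.length with hS | hS
  · have hmle : J.getD (lastIdx J i + 1) 0 ≤ J.getD (lastIdx J i) 0 :=
      sorted_getD_mono hmono (by omega)
    rcases eq_or_lt_of_le hmle with heq2 | hlt2
    · exfalso
      have hmem : lastIdx J i + 1 ∈
          (Finset.range J.length).filter (fun k => J.getD k 0 = J.getD i 0) := by
        simp only [Finset.mem_filter, Finset.mem_range]
        exact ⟨hS, by omega⟩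
      have := Finset.le_sup (f := id) hmem
      simp only [id] at this
      have : lastIdx J i + 1 ≤ lastIdx J i := this
      omega
    · omega
  · rw [List.getD_eq_default _ _ hS]; omega

lemma lastIdx_fix {J : List ℕ} (hmono : J.Pairwise (· ≥ ·)) {s : ℕ} (hs : s < J.length)
    (h : J.getD (s + 1) 0 < J.getD s 0) : lastIdx J s = s := by
  obtain ⟨hlt, heq⟩ := lastIdx_spec (J := J) hs
  have hle := le_lastIdx (J := J) hs
  rcases eq_or_lt_of_le hle with heq2 | hlt2
  · omega
  · exfalso
    have : J.getD (lastIdx J s) 0 ≤ J.getD (s + 1) 0 := sorted_getD_mono hmono (by omega)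
    omega

section YoungStepFacts

variable {J : List ℕ} {s : ℕ} (hpos : ∀ x ∈ J, 0 < x) (hmono : J.Pairwise (· ≥ ·))
  (hs : s < J.length) (hlt : J.getD (s + 1) 0 < J.getD s 0)

include hmono hs hlt in
lemma youngStep_sorted : (YoungStep J s).Pairwise (· ≥ ·) :=
  (sorted_set hmono hs hlt).filter _

lemma youngStep_pos : ∀ x ∈ YoungStep J s, 0 < x := by
  intro x hx
  have := List.of_mem_filter hx
  simp only [bne_iff_ne, ne_eq] at this
  omega

include hpos hs in
lemma youngStep_sum : (YoungStep J s).sum + 1 = J.sum := by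
  have h1 : 1 ≤ J.getD s 0 := by
    rw [List.getD_eq_getElem _ _ hs]; exact hpos _ (J.getElem_mem hs)
  rw [YoungStep, sum_filter_ne_zero, sum_set_pred hs h1]

lemma youngStep_length : (YoungStep J s).length ≤ J.length :=
  le_trans (List.length_filter_le _ _) (by simp)

include hmono hs hlt in
lemma youngStep_getD (k : ℕ) :
    (YoungStep J s).getD k 0 = (J.set s (J.getD s 0 - 1)).getD k 0 :=
  filter_ne_zero_getD (sorted_set hmono hs hlt) k

end YoungStepFacts



open MvPolynomial

variable {q : ℕ}

noncomputable def Sop (q : ℕ) (g : MvPolynomial (Fin q) ℤ) : MvPolynomial (Fin q) ℤ :=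
  ∑ i : Fin q, pderiv i ((∏ j : Fin q, X j) * g)

lemma coeff_pderiv (i : Fin q) (h : MvPolynomial (Fin q) ℤ) (m : Fin q →₀ ℕ) :
    coeff m (pderiv i h) = ((m i : ℤ) + 1) * coeff (m + Finsupp.single i 1) h := by
  induction h using MvPolynomial.induction_on' with
  | monomial s a =>
    rw [pderiv_monomial, coeff_monomial, coeff_monomial]
    split_ifs with h1 h2 h2
    · have hsi : s i = m i + 1 := by rw [h2]; simp
      rw [hsi]; push_cast; ring
    · have hsi : s i = 0 := by
        by_contra hne
        apply h2
        ext j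
        have h1j : s j - (Finsupp.single i 1) j = m j := by
          rw [← Finsupp.tsub_apply, h1]
        rw [Finsupp.add_apply]
        rcases eq_or_ne j i with rfl | hij
        · rw [Finsupp.single_eq_same] at h1j ⊢
          omega
        · rw [Finsupp.single_eq_of_ne hij] at h1j ⊢
          omega
      simp [hsi]
    · exfalso
      apply h1
      subst h2
      ext j
      simp only [Finsupp.tsub_apply, Finsupp.add_apply, Finsupp.single_apply]
      rcases eq_or_ne i j with rfl | hij
      · simp
      · simp [if_neg hij]
    · simp
  | add p r hp hr => simp only [map_add, coeff_add, hp, hr]; ring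

lemma prod_X_eq (q : ℕ) :
    (∏ j : Fin q, X j : MvPolynomial (Fin q) ℤ) =
      monomial (∑ j : Fin q, Finsupp.single j 1) 1 := by
  have h : ∀ t : Finset (Fin q),
      (∏ j ∈ t, X j : MvPolynomial (Fin q) ℤ) = monomial (∑ j ∈ t, Finsupp.single j 1) 1 := by
    intro t
    induction t using Finset.induction_on with
    | empty => simp
    | insert _ _ ha ih =>
      rw [Finset.prod_insert ha, Finset.sum_insert ha, ih, X, monomial_mul, one_mul]
  exact h Finset.univ

lemma ones_apply (k : Fin q) : (∑ j : Fin q, Finsupp.single j 1) k = (1 : ℕ) := by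
  rw [Finsupp.finset_sum_apply]
  simp [Finsupp.single_apply]

lemma symm_apply (g : Fin q → ℕ) (k : Fin q) :
    (Finsupp.equivFunOnFinite.symm g) k = g k := rfl

lemma coeff_Sop (g : MvPolynomial (Fin q) ℤ) (m : Fin q →₀ ℕ) :
    coeff m (Sop q g) =
      ∑ i : Fin q, ((m i : ℤ) + 1) *
        (if ∀ j, j ≠ i → 1 ≤ m j then
          coeff (Finsupp.equivFunOnFinite.symm fun k => m k + (if k = i then 1 else 0) - 1) g
        else 0) := by
  rw [Sop, coeff_sum]
  refine Finset.sum_congr rfl fun i _ => ?_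
  rw [coeff_pderiv, prod_X_eq, coeff_monomial_mul']
  by_cases hcond : ∀ j, j ≠ i → 1 ≤ m j
  · rw [if_pos, if_pos hcond, one_mul]
    · have harg : m + Finsupp.single i 1 - (∑ j : Fin q, Finsupp.single j 1) =
          Finsupp.equivFunOnFinite.symm fun k => m k + (if k = i then 1 else 0) - 1 := by
        ext k
        rw [Finsupp.tsub_apply, Finsupp.add_apply, Finsupp.single_apply, ones_apply, symm_apply]
        rcases eq_or_ne k i with rfl | hk
        · simp
        · rw [if_neg (Ne.symm hk), if_neg hk]
      rw [harg]
    · rw [Finsupp.le_def]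
      intro j
      rw [Finsupp.add_apply, Finsupp.single_apply, ones_apply]
      rcases eq_or_ne i j with rfl | hij
      · simp
      · rw [if_neg hij]
        have := hcond j (Ne.symm hij)
        omega
  · rw [if_neg, if_neg hcond, mul_zero]
    intro hle
    apply hcond
    intro j hj
    have := Finsupp.le_def.1 hle j
    rw [Finsupp.add_apply, Finsupp.single_apply, ones_apply, if_neg (Ne.symm hj)] at this
    omega

lemma coeff_iter_eq_zero (k : ℕ) (m : Fin q →₀ ℕ) (i0 : Fin q) (h : k < m i0) :
    coeff m ((Sop q)^[k] 1) = 0 := by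
  induction k generalizing m with
  | zero =>
    rw [Function.iterate_zero_apply, coeff_one, if_neg]
    intro h0
    rw [← h0] at h
    simp at h
  | succ k ih =>
    rw [Function.iterate_succ_apply', coeff_Sop]
    refine Finset.sum_eq_zero fun i _ => ?_
    split_ifs with hcond
    · have hz := ih (Finsupp.equivFunOnFinite.symm fun k2 => (m k2 + if k2 = i then 1 else 0) - 1)
        (by rw [symm_apply]; split_ifs <;> omega)
      rw [hz, mul_zero]
    · rw [mul_zero]

lemma rename_Sop (e : Equiv.Perm (Fin q)) (g : MvPolynomial (Fin q) ℤ) :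
    rename e (Sop q g) = Sop q (rename e g) := by
  rw [Sop, map_sum]
  have hf : rename e (∏ j : Fin q, (X j : MvPolynomial (Fin q) ℤ)) = ∏ j : Fin q, X j := by
    rw [map_prod]
    simp only [rename_X]
    exact Fintype.prod_equiv e _ _ fun i => rfl
  rw [Sop]
  rw [← Equiv.sum_comp e (fun t => pderiv t ((∏ j : Fin q, X j) * rename e g))]
  refine Finset.sum_congr rfl fun i _ => ?_
  rw [← pderiv_rename e.injective, map_mul, hf]

lemma rename_iter (k : ℕ) (e : Equiv.Perm (Fin q)) :
    rename e ((Sop q)^[k] 1) = (Sop q)^[k] 1 := by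
  induction k with
  | zero => simp
  | succ k ih => rw [Function.iterate_succ_apply', rename_Sop, ih]

lemma coeff_comp_perm (k : ℕ) (e : Equiv.Perm (Fin q)) (g : Fin q → ℕ) :
    coeff (Finsupp.equivFunOnFinite.symm (g ∘ e)) ((Sop q)^[k] 1) =
      coeff (Finsupp.equivFunOnFinite.symm g) ((Sop q)^[k] 1) := by
  have hmap : Finsupp.mapDomain e (Finsupp.equivFunOnFinite.symm (g ∘ e)) =
      Finsupp.equivFunOnFinite.symm g := by
    ext y
    have : y = e (e.symm y) := by simp
    rw [this, Finsupp.mapDomain_apply e.injective, symm_apply, symm_apply]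
    simp
  calc coeff (Finsupp.equivFunOnFinite.symm (g ∘ e)) ((Sop q)^[k] 1)
      = coeff (Finsupp.mapDomain e (Finsupp.equivFunOnFinite.symm (g ∘ e)))
          (rename e ((Sop q)^[k] 1)) :=
        (coeff_rename_mapDomain _ e.injective _ _).symm
    _ = coeff (Finsupp.equivFunOnFinite.symm g) ((Sop q)^[k] 1) := by
        rw [hmap, rename_iter]

section Main

variable {q : ℕ}

open Finset in
lemma main (n : ℕ) : ∀ J : List ℕ, (∀ x ∈ J, 0 < x) → J.Pairwise (· ≥ ·) → J.sum = n →
    J.length ≤ q →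
    MvPolynomial.coeff (Finsupp.equivFunOnFinite.symm fun i : Fin q => n - J.getD i.val 0)
      ((Sop q)^[n] 1) = dAux n J := by
  induction n with
  | zero =>
    intro J hpos hmono hN hq
    have hJ : J = [] := by
      cases J with
      | nil => rfl
      | cons a t =>
        exfalso
        have := hpos a (by simp)
        simp only [List.sum_cons] at hN
        omega
    subst hJ
    have h0 : (Finsupp.equivFunOnFinite.symm fun i : Fin q => 0 - List.getD [] i.val 0)
        = (0 : Fin q →₀ ℕ) := by
      ext k; rw [symm_apply]; simp
    rw [Function.iterate_zero_apply, h0]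
    simp [dAux]
  | succ n ih =>
    intro J hpos hmono hN hq
    have hjle : ∀ k, J.getD k 0 ≤ n + 1 := fun k => hN ▸ getD_le_sum J k
    have hpos' : ∀ k, k < J.length → 1 ≤ J.getD k 0 := fun k hk => by
      rw [List.getD_eq_getElem _ _ hk]; exact hpos _ (J.getElem_mem hk)
    rw [Function.iterate_succ_apply', coeff_Sop]
    have htrans : ∑ i : Fin q,
        (((Finsupp.equivFunOnFinite.symm fun i : Fin q => n + 1 - J.getD i.val 0) i : ℤ) + 1) *
          (if ∀ j, j ≠ i → 1 ≤ (Finsupp.equivFunOnFinite.symm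
              fun i : Fin q => n + 1 - J.getD i.val 0) j then
            MvPolynomial.coeff (Finsupp.equivFunOnFinite.symm fun k =>
              (Finsupp.equivFunOnFinite.symm fun i : Fin q => n + 1 - J.getD i.val 0) k +
                (if k = i then 1 else 0) - 1) ((Sop q)^[n] 1)
          else 0) =
        ∑ i : Fin q, (fun t : ℕ => if t < J.length then
            (((n : ℤ) + 2) - J.getD t 0) * dAux n (YoungStep J (lastIdx J t)) else 0) i.val := by
      refine Finset.sum_congr rfl fun i _ => ?_
      simp only [symm_apply]
      by_cases hcond : ∀ j : Fin q, j ≠ i → 1 ≤ n + 1 - J.getD j.val 0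
      · simp only [eq_true hcond, ↓reduceIte]
        have hcondv : ∀ j : Fin q, j ≠ i → J.getD j.val 0 ≤ n := fun j hj => by
          have h1 := hcond j hj; have h2 := hjle j.val; omega
        by_cases hilen : i.val < J.length
        · rw [if_pos hilen]
          obtain ⟨hslen, hsval⟩ := lastIdx_spec (J := J) hilen
          have hslt : J.getD (lastIdx J i.val + 1) 0 < J.getD (lastIdx J i.val) 0 := by
            have := lastIdx_getD_lt hmono hpos hilen
            omega
          have hs_q : lastIdx J i.val < q := lt_of_lt_of_le hslen hq
          have hipos : 1 ≤ J.getD i.val 0 := hpos' _ hilen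
          have hswap : (fun k : Fin q => n + 1 - J.getD k.val 0 + (if k = i then 1 else 0) - 1)
              = (fun k : Fin q => n - (YoungStep J (lastIdx J i.val)).getD k.val 0) ∘
                  (Equiv.swap i ⟨lastIdx J i.val, hs_q⟩) := by
            funext k
            simp only [Function.comp_apply]
            rw [youngStep_getD hmono hslen hslt, getD_set hslen]
            rcases eq_or_ne k i with rfl | hki
            · rw [Equiv.swap_apply_left, if_pos rfl, if_pos rfl]
              omega
            · rcases eq_or_ne k ⟨lastIdx J i.val, hs_q⟩ with rfl | hkis
              · rw [Equiv.swap_apply_right, if_neg hki]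
                have hivs : ¬ i.val = lastIdx J i.val := by
                  intro h
                  exact hki (Fin.ext h.symm)
                rw [if_neg hivs]
                have := hcondv _ hki
                simp only [Fin.val_mk] at this ⊢
                omega
              · rw [Equiv.swap_apply_of_ne_of_ne hki hkis, if_neg hki,
                  if_neg (fun h => hkis (Fin.ext h))]
                have := hcondv k hki
                omega
          rw [hswap, coeff_comp_perm]
          rw [ih (YoungStep J (lastIdx J i.val))
            (youngStep_pos)
            (youngStep_sorted hmono hslen hslt)
            (by have := youngStep_sum hpos hslen; omega)
            (le_trans youngStep_length hq)]
          have hcast : ((n + 1 - J.getD i.val 0 : ℕ) : ℤ) = (n : ℤ) + 1 - J.getD i.val 0 := by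
            have := hjle i.val
            omega
          rw [hcast]
          ring
        · rw [if_neg hilen]
          have hj0 : J.getD i.val 0 = 0 := List.getD_eq_default _ _ (by omega)
          have hz := coeff_iter_eq_zero n (Finsupp.equivFunOnFinite.symm fun k : Fin q =>
              n + 1 - J.getD k.val 0 + (if k = i then 1 else 0) - 1) i
            (by rw [symm_apply, if_pos rfl]; omega)
          rw [hz, mul_zero]
      · simp only [hcond, ↓reduceIte, mul_zero]
        push_neg at hcond
        obtain ⟨j, hji, hmj⟩ := hcond
        have hj1 : J.getD j.val 0 = n + 1 := by
          have := hjle j.val; omega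
        obtain ⟨hlen1, hjv0⟩ := length_eq_one_of_getD_eq_sum hpos
          (by rw [hj1, hN]) (by rw [hN]; omega)
        have hni : ¬ i.val < J.length := by
          rw [hlen1]
          intro hi1
          exact hji (Fin.ext (by omega))
        rw [if_neg hni]
    rw [htrans, Fin.sum_univ_eq_sum_range (fun t : ℕ => if t < J.length then
      (((n : ℤ) + 2) - J.getD t 0) * dAux n (YoungStep J (lastIdx J t)) else 0) q]
    rw [← Finset.sum_subset (Finset.range_subset_range.2 hq)
      (fun x _ hx => if_neg (by simpa using hx))]
    have hterm : ∀ t ∈ Finset.range J.length,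
        (if t < J.length then (((n : ℤ) + 2) - J.getD t 0) * dAux n (YoungStep J (lastIdx J t))
          else 0)
        = (fun u : ℕ => (((n : ℤ) + 2) - J.getD u 0) * dAux n (YoungStep J u)) (lastIdx J t) := by
      intro t ht
      rw [Finset.mem_range] at ht
      rw [if_pos ht]
      obtain ⟨_, hval⟩ := lastIdx_spec (J := J) ht
      have hb : (fun u : ℕ => (((n : ℤ) + 2) - J.getD u 0) * dAux n (YoungStep J u)) (lastIdx J t)
          = (((n : ℤ) + 2) - J.getD (lastIdx J t) 0) * dAux n (YoungStep J (lastIdx J t)) := rfl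
      rw [hb, hval]
    rw [Finset.sum_congr rfl hterm]
    rw [← Finset.sum_fiberwise_of_maps_to (g := lastIdx J)
      (t := (Finset.range J.length).filter fun u => J.getD (u + 1) 0 < J.getD u 0)
      (fun x hx => by
        rw [Finset.mem_range] at hx
        obtain ⟨h1, h2⟩ := lastIdx_spec (J := J) hx
        rw [Finset.mem_filter, Finset.mem_range]
        refine ⟨h1, ?_⟩
        have := lastIdx_getD_lt hmono hpos hx
        omega)]
    show _ = dAux (n + 1) J
    rw [dAux]
    refine Finset.sum_congr rfl fun u hu => ?_
    rw [Finset.mem_filter, Finset.mem_range] at hu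
    obtain ⟨hulen, hult⟩ := hu
    have hufix : lastIdx J u = u := lastIdx_fix hmono hulen hult
    have hconst : ∀ x ∈ (Finset.range J.length).filter (fun x => lastIdx J x = u),
        (fun u : ℕ => (((n : ℤ) + 2) - J.getD u 0) * dAux n (YoungStep J u)) (lastIdx J x)
        = (((n : ℤ) + 2) - J.getD u 0) * dAux n (YoungStep J u) := by
      intro x hx
      rw [(Finset.mem_filter.1 hx).2]
    rw [Finset.sum_congr rfl hconst, Finset.sum_const]
    have hfib : (Finset.range J.length).filter (fun x => lastIdx J x = u)
        = (Finset.range J.length).filter (fun x => J.getD x 0 = J.getD u 0) := by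
      refine Finset.filter_congr fun x hx => ?_
      rw [Finset.mem_range] at hx
      constructor
      · intro h
        have := (lastIdx_spec (J := J) hx).2
        rw [h] at this
        omega
      · intro h
        rw [lastIdx_congr h, hufix]
    rw [hfib, card_filter_getD, nsmul_eq_mul, hN]
    push_cast
    ring

end Main

end CWHelper

theorem coeff_word_eq_youngD (p n : ℕ) (hp : p.Prime) (hn1 : 1 ≤ n) (hn2 : n ≤ p - 1)
    (D : Derivation ℤ (MvPolynomial (Fin (p - 1)) ℤ) (MvPolynomial (Fin (p - 1)) ℤ))
    (hD : ∀ i : Fin (p - 1), D (MvPolynomial.X i) = 1)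
    (J : List ℕ) (hpos : ∀ x ∈ J, 0 < x) (hmono : List.Pairwise (· ≥ ·) J)
    (hN : J.sum = n) (hm : J.length ≤ p - 1) :
    MvPolynomial.coeff
        (Finsupp.equivFunOnFinite.symm fun i : Fin (p - 1) => n - J.getD i.val 0)
        ((fun g : MvPolynomial (Fin (p - 1)) ℤ =>
            D ((∏ i : Fin (p - 1), MvPolynomial.X i) * g))^[n] 1)
      = youngD J := by
  classical
  open MvPolynomial in
  have hDg : ∀ g : MvPolynomial (Fin (p - 1)) ℤ, D g = ∑ i : Fin (p - 1), pderiv i g := by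
    intro g
    induction g using MvPolynomial.induction_on with
    | C a => simp [MvPolynomial.derivation_C, MvPolynomial.pderiv_C]
    | add f g hf hg => simp [map_add, hf, hg, Finset.sum_add_distrib]
    | mul_X g j hg =>
      have hX : ∑ i : Fin (p - 1), pderiv i (X j : MvPolynomial (Fin (p - 1)) ℤ) = 1 := by
        simp only [pderiv_X, Pi.single_apply]
        rw [Finset.sum_ite_eq Finset.univ j (fun _ => (1 : MvPolynomial (Fin (p - 1)) ℤ))]
        simp
      have hleib : ∀ i : Fin (p - 1), pderiv i (g * X j)
          = g • pderiv i (X j) + X j • pderiv i g := fun i => Derivation.leibniz _ _ _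
      rw [Derivation.leibniz, hD j, hg, Finset.sum_congr rfl fun i _ => hleib i,
        Finset.sum_add_distrib, ← Finset.smul_sum, ← Finset.smul_sum, hX]
  have hfun : (fun g : MvPolynomial (Fin (p - 1)) ℤ =>
      D ((∏ i : Fin (p - 1), MvPolynomial.X i) * g)) = CWHelper.Sop (p - 1) := by
    funext g
    rw [hDg, CWHelper.Sop]
  rw [hfun, youngD, ← hN]
  exact CWHelper.main J.sum J hpos hmono rfl hm
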